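/- With the trajectory and greedy setup, suppose each action a_t lies in the box [-1,1]^m and maximizes Q_t over [-1,1]^m, the value-gradients G_t := ∇Ṽ(x_t) satisfy G_F = 0 and the costate recursion G_t = ∇_x r(x_t, a_t) + γ (D_x f(x_t, a_t))ᵀ G_{t+1} for 0 ≤ t < F, and additionally every action component is saturated: |a_t^i| = 1 and ∂Q_t/∂a^i(a_t) ≠ 0 for all t and i. Then the trajectory is locally optimal: the total reward R, viewed as a function of the action tuple with x₀ fixed, has a local maximum at (a₀, …, a_{F−1}) relative to the constraint set ([-1,1]^m)^F. -/

import Mathlib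

open Matrix

/-- Gradient of a scalar function, as a vector of partial derivatives. -/
noncomputable def grad {k : ℕ} (g : (Fin k → ℝ) → ℝ) (x : Fin k → ℝ) : Fin k → ℝ :=
  fun i => fderiv ℝ g x (Pi.single i 1)

/-- Gradient of `r` in the state variable. -/
noncomputable def gradX {n m : ℕ} (r : (Fin n → ℝ) × (Fin m → ℝ) → ℝ)
    (x : Fin n → ℝ) (a : Fin m → ℝ) : Fin n → ℝ :=
  fun i => fderiv ℝ (fun y => r (y, a)) x (Pi.single i 1)

/-- Jacobian of `f` in the state variable (rows indexed by output components). -/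
noncomputable def jacX {n m : ℕ} (f : (Fin n → ℝ) × (Fin m → ℝ) → Fin n → ℝ)
    (x : Fin n → ℝ) (a : Fin m → ℝ) : Matrix (Fin n) (Fin n) ℝ :=
  Matrix.of fun j i => fderiv ℝ (fun y => f (y, a) j) x (Pi.single i 1)

/-- Extend a finite action tuple to all of `ℕ` (by `0` beyond `F`). -/
noncomputable def pad {F m : ℕ} (as : Fin F → Fin m → ℝ) : ℕ → Fin m → ℝ :=
  fun t => if h : t < F then as ⟨t, h⟩ else 0

/-- The trajectory generated from `x₀` by the actions `as`. -/
def traj {n m : ℕ} (f : (Fin n → ℝ) × (Fin m → ℝ) → Fin n → ℝ)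
    (x₀ : Fin n → ℝ) (as : ℕ → Fin m → ℝ) : ℕ → Fin n → ℝ
  | 0 => x₀
  | t + 1 => f (traj f x₀ as t, as t)

/-- The total (discounted) reward, as a function of the whole action tuple. -/
noncomputable def Rtot {n m : ℕ} (F : ℕ) (γ : ℝ)
    (f : (Fin n → ℝ) × (Fin m → ℝ) → Fin n → ℝ)
    (r : (Fin n → ℝ) × (Fin m → ℝ) → ℝ)
    (x₀ : Fin n → ℝ) (as : Fin F → Fin m → ℝ) : ℝ :=
  ∑ t ∈ Finset.range F, γ ^ t * r (traj f x₀ (pad as) t, pad as t)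

open Topology Filter

/-- Any continuous linear map on `Fin k → ℝ` is determined by its values on basis vectors. -/
theorem clm_apply_eq_sum {k : ℕ} {W : Type*} [NormedAddCommGroup W] [NormedSpace ℝ W]
    (L : (Fin k → ℝ) →L[ℝ] W) (y : Fin k → ℝ) :
    L y = ∑ i, y i • L (Pi.single i 1) := by
  have hy : y = ∑ i, y i • (Pi.single i 1 : Fin k → ℝ) := by
    funext j
    simp [Finset.sum_apply, Pi.single_apply]
  conv_lhs => rw [hy]
  rw [map_sum]
  simp

theorem clm_apply_eq_sum2 {F m : ℕ} {W : Type*} [NormedAddCommGroup W] [NormedSpace ℝ W]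
    (L : (Fin F → Fin m → ℝ) →L[ℝ] W) (w : Fin F → Fin m → ℝ) :
    L w = ∑ t, ∑ i, w t i • L (Pi.single t (Pi.single i 1)) := by
  have hw : w = ∑ t, ∑ i, w t i • (Pi.single t (Pi.single i 1) : Fin F → Fin m → ℝ) := by
    funext t' i'
    simp only [Finset.sum_apply, Pi.smul_apply, Pi.single_apply, smul_ite, smul_zero]
    simp [Finset.sum_ite_eq', apply_ite (fun g : Fin m → ℝ => g i'), Pi.single_apply]
  conv_lhs => rw [hw]
  rw [map_sum]
  simp [map_sum]

theorem sign_max {m : ℕ} (Q : (Fin m → ℝ) → ℝ) (a : Fin m → ℝ)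
    (hQ : DifferentiableAt ℝ Q a) (i : Fin m)
    (hmax : ∀ b : Fin m → ℝ, (∀ j, b j ∈ Set.Icc (-1:ℝ) 1) → Q b ≤ Q a)
    (hbox : ∀ j, a j ∈ Set.Icc (-1:ℝ) 1)
    (hai : |a i| = 1) :
    0 ≤ a i * fderiv ℝ Q a (Pi.single i 1) := by
  set q := fderiv ℝ Q a (Pi.single i 1) with hq
  have hupd : HasDerivAt (fun c => Q (Function.update a i c)) q (a i) := by
    have h1 : HasDerivAt (Function.update a i) (Pi.single i (1:ℝ)) (a i) :=
      hasDerivAt_update a i (a i)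
    have h2 : HasFDerivAt Q (fderiv ℝ Q a) (Function.update a i (a i)) := by
      rw [Function.update_eq_self]; exact hQ.hasFDerivAt
    exact h2.comp_hasDerivAt (a i) h1
  have hval : ∀ c ∈ Set.Icc (-1:ℝ) 1, Q (Function.update a i c) ≤ Q (Function.update a i (a i)) := by
    intro c hc
    rw [Function.update_eq_self]
    refine hmax _ fun j => ?_
    rcases eq_or_ne j i with rfl | hj
    · simpa using hc
    · simpa [Function.update_apply, hj] using hbox j
  set ψ := fun c => Q (Function.update a i c) with hψ
  rcases abs_eq (le_of_lt one_pos) |>.mp hai with h1 | h1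
  · -- a i = 1 : show 0 ≤ q
    have hq0 : 0 ≤ q := by
      have hslope : Filter.Tendsto (slope ψ (1:ℝ)) (𝓝[Set.Iio 1 \ {1}] 1) (𝓝 q) := by
        rw [← hasDerivWithinAt_iff_tendsto_slope]
        exact (h1 ▸ hupd.hasDerivWithinAt)
      rw [show Set.Iio (1:ℝ) \ {1} = Set.Iio 1 from Set.diff_singleton_eq_self (by simp)] at hslope
      refine ge_of_tendsto hslope ?_
      have hIoi : Set.Ioi (-1:ℝ) ∈ 𝓝[Set.Iio (1:ℝ)] (1:ℝ) :=
        nhdsWithin_le_nhds (Ioi_mem_nhds (by norm_num))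
      have hIio : Set.Iio (1:ℝ) ∈ 𝓝[Set.Iio (1:ℝ)] (1:ℝ) := self_mem_nhdsWithin
      filter_upwards [hIoi, hIio] with c hc1 hc2
      have hclt : c < 1 := hc2
      have hnum : ψ c - ψ 1 ≤ 0 := by
        have := hval c ⟨le_of_lt hc1, le_of_lt hclt⟩
        have h11 : ψ 1 = Q (Function.update a i (a i)) := by rw [h1]
        rw [h11]; linarith
      have : slope ψ 1 c = (ψ c - ψ 1) / (c - 1) := by
        rw [slope_def_field]
      rw [this]
      exact div_nonneg_iff.mpr (Or.inr ⟨hnum, by linarith⟩)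
    rw [h1]; linarith
  · -- a i = -1 : show q ≤ 0
    have hq0 : q ≤ 0 := by
      have hslope : Filter.Tendsto (slope ψ (-1:ℝ)) (𝓝[Set.Ioi (-1) \ {-1}] (-1)) (𝓝 q) := by
        rw [← hasDerivWithinAt_iff_tendsto_slope]
        exact (h1 ▸ hupd.hasDerivWithinAt)
      rw [show Set.Ioi (-1:ℝ) \ {-1} = Set.Ioi (-1) from Set.diff_singleton_eq_self (by simp)] at hslope
      refine le_of_tendsto hslope ?_
      have hIio : Set.Iio (1:ℝ) ∈ 𝓝[Set.Ioi (-1:ℝ)] (-1:ℝ) :=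
        nhdsWithin_le_nhds (Iio_mem_nhds (by norm_num))
      have hIoi : Set.Ioi (-1:ℝ) ∈ 𝓝[Set.Ioi (-1:ℝ)] (-1:ℝ) := self_mem_nhdsWithin
      filter_upwards [hIio, hIoi] with c hc1 hc2
      have hcgt : -1 < c := hc2
      have hnum : ψ c - ψ (-1) ≤ 0 := by
        have := hval c ⟨le_of_lt hcgt, le_of_lt hc1⟩
        have h11 : ψ (-1) = Q (Function.update a i (a i)) := by rw [h1]
        rw [h11]; linarith
      have : slope ψ (-1) c = (ψ c - ψ (-1)) / (c + 1) := by
        rw [slope_def_field]; ring_nf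
      rw [this]
      exact div_nonpos_iff.mpr (Or.inr ⟨hnum, by linarith⟩)
    rw [h1]; linarith

/-- The derivative of the map `x' ↦ r (x', b)`. -/
theorem hasFDerivAt_fixSnd {n m : ℕ} {W : Type*} [NormedAddCommGroup W] [NormedSpace ℝ W]
    (r : (Fin n → ℝ) × (Fin m → ℝ) → W) (hr : Differentiable ℝ r)
    (x : Fin n → ℝ) (b : Fin m → ℝ) :
    HasFDerivAt (fun x' => r (x', b))
      ((fderiv ℝ r (x, b)).comp ((ContinuousLinearMap.id ℝ (Fin n → ℝ)).prod 0)) x := by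
  exact (hr (x, b)).hasFDerivAt.comp x ((hasFDerivAt_id x).prodMk (hasFDerivAt_const b x))

theorem gradX_dot {n m : ℕ} (r : (Fin n → ℝ) × (Fin m → ℝ) → ℝ) (hr : Differentiable ℝ r)
    (x : Fin n → ℝ) (b : Fin m → ℝ) (y : Fin n → ℝ) :
    gradX r x b ⬝ᵥ y = fderiv ℝ r (x, b) (y, 0) := by
  have hfd := hasFDerivAt_fixSnd r hr x b
  have h1 : fderiv ℝ (fun x' => r (x', b)) x = (fderiv ℝ r (x, b)).comp
      ((ContinuousLinearMap.id ℝ (Fin n → ℝ)).prod 0) := hfd.fderiv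
  have h2 := clm_apply_eq_sum ((fderiv ℝ r (x, b)).comp
      ((ContinuousLinearMap.id ℝ (Fin n → ℝ)).prod 0)) y
  simp only [ContinuousLinearMap.comp_apply, ContinuousLinearMap.prod_apply,
    ContinuousLinearMap.id_apply, ContinuousLinearMap.zero_apply] at h2
  rw [show ((y, (0 : Fin m → ℝ)) : (Fin n → ℝ) × (Fin m → ℝ)) = (y, 0) from rfl] at h2
  rw [h2]
  unfold gradX dotProduct
  rw [h1]
  simp [ContinuousLinearMap.comp_apply, mul_comm]

theorem jacX_mulVec {n m : ℕ} (f : (Fin n → ℝ) × (Fin m → ℝ) → Fin n → ℝ)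
    (hf : Differentiable ℝ f)
    (x : Fin n → ℝ) (b : Fin m → ℝ) (y : Fin n → ℝ) :
    (jacX f x b) *ᵥ y = fderiv ℝ f (x, b) (y, 0) := by
  funext j
  have hfd := hasFDerivAt_fixSnd f hf x b
  have hj : HasFDerivAt (fun x' => f (x', b) j)
      ((ContinuousLinearMap.proj j).comp ((fderiv ℝ f (x, b)).comp
        ((ContinuousLinearMap.id ℝ (Fin n → ℝ)).prod 0))) x :=
    ((ContinuousLinearMap.proj j : (Fin n → ℝ) →L[ℝ] ℝ)).hasFDerivAt.comp x hfd
  have h1 := hj.fderiv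
  have h2 := clm_apply_eq_sum ((ContinuousLinearMap.proj j).comp ((fderiv ℝ f (x, b)).comp
        ((ContinuousLinearMap.id ℝ (Fin n → ℝ)).prod 0))) y
  simp only [ContinuousLinearMap.comp_apply, ContinuousLinearMap.prod_apply,
    ContinuousLinearMap.id_apply, ContinuousLinearMap.zero_apply,
    ContinuousLinearMap.proj_apply] at h2
  rw [show ((jacX f x b) *ᵥ y) j = ∑ i, (fderiv ℝ (fun x' => f (x', b) j) x (Pi.single i 1)) * y i
    from rfl]
  rw [h2, h1]
  simp [ContinuousLinearMap.comp_apply, mul_comm]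

theorem grad_dot {k : ℕ} (g : (Fin k → ℝ) → ℝ) (x z : Fin k → ℝ) :
    fderiv ℝ g x z = grad g x ⬝ᵥ z := by
  rw [clm_apply_eq_sum (fderiv ℝ g x) z]
  simp [grad, dotProduct, mul_comm]

theorem term_bound (α β q gt cc : ℝ) (hβ1 : -1 ≤ β) (hβ2 : β ≤ 1) (hα : |α| = 1)
    (hsign : 0 < α * q) (hgt : 0 < gt) (h3 : cc ≤ gt * |q|) :
    (β - α) * (gt * q) ≤ -(cc * |β - α|) := by
  rcases (abs_eq (le_of_lt one_pos)).mp hα with hα' | hα'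
  · subst hα'
    have hqpos : 0 < q := by nlinarith
    have habs : |β - 1| = 1 - β := by rw [abs_of_nonpos (by linarith)]; ring
    have habs2 : |q| = q := abs_of_pos hqpos
    rw [habs]
    rw [habs2] at h3
    nlinarith
  · subst hα'  -- α = -1? subst needs var; hα' : α = -1
    have hqneg : q < 0 := by nlinarith
    have habs : |β - -1| = β + 1 := by rw [abs_of_nonneg (by linarith)]; ring
    have habs2 : |q| = -q := abs_of_neg hqneg
    rw [habs]
    rw [habs2] at h3
    nlinarith

/-- The (iterated) derivative of the trajectory map. -/
noncomputable def Dseq {n m : ℕ} (F : ℕ) (f : (Fin n → ℝ) × (Fin m → ℝ) → Fin n → ℝ)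
    (x : ℕ → Fin n → ℝ) (b : ℕ → Fin m → ℝ) :
    ℕ → ((Fin F → Fin m → ℝ) →L[ℝ] (Fin n → ℝ))
  | 0 => 0
  | t + 1 => (fderiv ℝ f (x t, b t)).comp ((Dseq F f x b t).prod
      (if h : t < F then ContinuousLinearMap.proj (⟨t, h⟩ : Fin F) else 0))

set_option maxHeartbeats 1600000 in
/-- Corollary to Theorem 1: a greedy trajectory satisfying the
costate recursion on which every action component is saturated (bang-bang
control) is locally optimal within the box constraints. -/
theorem stmt9 {n m : ℕ} (F : ℕ) (hF : 1 ≤ F) (γ : ℝ) (hγ : 0 < γ)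
    (f : (Fin n → ℝ) × (Fin m → ℝ) → Fin n → ℝ)
    (r : (Fin n → ℝ) × (Fin m → ℝ) → ℝ)
    (hf : ContDiff ℝ 1 f) (hr : ContDiff ℝ 1 r)
    (V : (Fin n → ℝ) → ℝ) (hV : Differentiable ℝ V)
    (x₀ : Fin n → ℝ) (a : Fin F → Fin m → ℝ)
    (x : ℕ → Fin n → ℝ) (hxdef : x = traj f x₀ (pad a))
    (Q : ℕ → (Fin m → ℝ) → ℝ)
    (hQdef : ∀ t, Q t = fun b => r (x t, b) + γ * V (f (x t, b)))
    (hbox : ∀ t : Fin F, ∀ i, a t i ∈ Set.Icc (-1 : ℝ) 1)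
    (hgreedy : ∀ t : Fin F, ∀ b : Fin m → ℝ,
      (∀ i, b i ∈ Set.Icc (-1 : ℝ) 1) → Q t b ≤ Q t (a t))
    (G : ℕ → Fin n → ℝ) (hGdef : ∀ t, G t = grad V (x t))
    (hGF : G F = 0)
    (hGrec : ∀ t < F, G t =
      gradX r (x t) (pad a t) + γ • (jacX f (x t) (pad a t))ᵀ.mulVec (G (t + 1)))
    (hsat : ∀ t : Fin F, ∀ i : Fin m,
      |a t i| = 1 ∧ fderiv ℝ (Q t) (a t) (Pi.single i 1) ≠ 0) :
    IsLocalMaxOn (Rtot F γ f r x₀)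
      {as : Fin F → Fin m → ℝ | ∀ t i, as t i ∈ Set.Icc (-1 : ℝ) 1} a := by
  classical
  -- trivial case `m = 0`
  rcases Nat.eq_zero_or_pos m with hm | hm
  · subst hm
    refine Filter.Eventually.of_forall fun v => ?_
    have : v = a := Subsingleton.elim _ _
    rw [this]
  have hfd : Differentiable ℝ f := hf.differentiable one_ne_zero
  have hrd : Differentiable ℝ r := hr.differentiable one_ne_zero
  have hx : ∀ t, traj f x₀ (pad a) t = x t := fun t => by rw [hxdef]
  have hxsucc : ∀ t, x (t + 1) = f (x t, pad a t) := by
    intro t; rw [hxdef]; rfl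
  have hpadc : ∀ t : Fin F, pad a (t : ℕ) = a t := by
    intro t; simp [pad, t.isLt]
  -- derivative of the padded action coordinates
  have hpadD : ∀ t, HasFDerivAt (fun as : Fin F → Fin m → ℝ => pad as t)
      (if h : t < F then (ContinuousLinearMap.proj (⟨t, h⟩ : Fin F) :
        (Fin F → Fin m → ℝ) →L[ℝ] (Fin m → ℝ)) else 0) a := by
    intro t
    by_cases h : t < F
    · simp only [pad, dif_pos h]
      exact (ContinuousLinearMap.proj (⟨t, h⟩ : Fin F) :
        (Fin F → Fin m → ℝ) →L[ℝ] (Fin m → ℝ)).hasFDerivAt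
    · simp only [pad, dif_neg h]
      exact hasFDerivAt_const 0 a
  -- derivative of the trajectory map
  have hXD : ∀ t, HasFDerivAt (fun as : Fin F → Fin m → ℝ => traj f x₀ (pad as) t)
      (Dseq F f x (pad a) t) a := by
    intro t
    induction t with
    | zero => exact hasFDerivAt_const x₀ a
    | succ t ih =>
        have hpair := ih.prodMk (hpadD t)
        have hc : HasFDerivAt f (fderiv ℝ f (x t, pad a t)) (traj f x₀ (pad a) t, pad a t) := by
          rw [hx t]; exact (hfd _).hasFDerivAt
        exact hc.comp a hpair
  -- the derivative of the total reward
  set g : (Fin F → Fin m → ℝ) →L[ℝ] ℝ := ∑ t ∈ Finset.range F,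
    (γ ^ t) • ((fderiv ℝ r (x t, pad a t)).comp ((Dseq F f x (pad a) t).prod
      (if h : t < F then (ContinuousLinearMap.proj (⟨t, h⟩ : Fin F) :
        (Fin F → Fin m → ℝ) →L[ℝ] (Fin m → ℝ)) else 0))) with hg
  have hRD : HasFDerivAt (Rtot F γ f r x₀) g a := by
    rw [hg]
    refine HasFDerivAt.fun_sum fun t ht => ?_
    have hpair := (hXD t).prodMk (hpadD t)
    have hc : HasFDerivAt r (fderiv ℝ r (x t, pad a t)) (traj f x₀ (pad a) t, pad a t) := by
      rw [hx t]; exact (hrd _).hasFDerivAt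
    exact (hc.comp a hpair).const_mul _
  -- the value of `g` on basis vectors
  have key : ∀ (s : Fin F) (i : Fin m),
      g (Pi.single s (Pi.single i 1)) = γ ^ (s : ℕ) * fderiv ℝ (Q s) (a s) (Pi.single i 1) := by
    intro s i
    set w : Fin F → Fin m → ℝ := Pi.single s (Pi.single i 1) with hw
    set y : ℕ → Fin n → ℝ := fun t => Dseq F f x (pad a) t w with hy
    set wh : ℕ → Fin m → ℝ := fun t =>
      (if h : t < F then (ContinuousLinearMap.proj (⟨t, h⟩ : Fin F) :
        (Fin F → Fin m → ℝ) →L[ℝ] (Fin m → ℝ)) else 0) w with hwh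
    have hwhval : ∀ t : ℕ, wh t = if (t : ℕ) = (s : ℕ) then Pi.single i 1 else 0 := by
      intro t
      by_cases h : t < F
      · rw [hwh]
        simp only [dif_pos h, ContinuousLinearMap.proj_apply, hw]
        rw [Pi.single_apply]
        congr 1
        simp [Fin.ext_iff]
      · have hne : (t : ℕ) ≠ (s : ℕ) := by have := s.isLt; omega
        rw [hwh]
        simp [dif_neg h, hne]
    have hy0 : y 0 = 0 := rfl
    have hyrec : ∀ t, y (t + 1) = fderiv ℝ f (x t, pad a t) (y t, wh t) := fun t => rfl
    have hdot : ∀ t, t < F → ∀ yv : Fin n → ℝ,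
        G t ⬝ᵥ yv = fderiv ℝ r (x t, pad a t) (yv, 0)
          + γ * (G (t + 1) ⬝ᵥ fderiv ℝ f (x t, pad a t) (yv, 0)) := by
      intro t ht yv
      rw [hGrec t ht, add_dotProduct, smul_dotProduct]
      rw [gradX_dot r hrd, Matrix.mulVec_transpose, ← Matrix.dotProduct_mulVec,
        jacX_mulVec f hfd]
      simp [smul_eq_mul]
    have hstep : ∀ t ∈ Finset.range F,
        γ ^ t * (G t ⬝ᵥ y t) - γ ^ (t + 1) * (G (t + 1) ⬝ᵥ y (t + 1))
        = γ ^ t * fderiv ℝ r (x t, pad a t) (y t, 0)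
          - γ ^ (t + 1) * (G (t + 1) ⬝ᵥ fderiv ℝ f (x t, pad a t) (0, wh t)) := by
      intro t ht
      rw [hyrec t]
      have hsplit : fderiv ℝ f (x t, pad a t) (y t, wh t)
          = fderiv ℝ f (x t, pad a t) (y t, 0) + fderiv ℝ f (x t, pad a t) (0, wh t) := by
        rw [← map_add]
        congr 1
        simp [Prod.mk_add_mk]
      rw [hsplit, dotProduct_add, hdot t (Finset.mem_range.mp ht)]
      ring
    have htel : ∑ t ∈ Finset.range F, γ ^ t * fderiv ℝ r (x t, pad a t) (y t, 0)
        = ∑ t ∈ Finset.range F, γ ^ (t + 1) * (G (t + 1) ⬝ᵥ fderiv ℝ f (x t, pad a t) (0, wh t)) := by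
      have h0 := Finset.sum_range_sub' (fun t => γ ^ t * (G t ⬝ᵥ y t)) F
      rw [Finset.sum_congr rfl hstep] at h0
      rw [hy0, hGF] at h0
      simp only [dotProduct_zero, zero_dotProduct, mul_zero, sub_zero, pow_zero,
        one_mul] at h0
      rw [Finset.sum_sub_distrib] at h0
      linarith
    have hgw : g w = ∑ t ∈ Finset.range F,
        (γ ^ t * fderiv ℝ r (x t, pad a t) (y t, 0)
          + γ ^ t * fderiv ℝ r (x t, pad a t) (0, wh t)) := by
      rw [hg, ContinuousLinearMap.sum_apply]
      refine Finset.sum_congr rfl fun t ht => ?_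
      rw [ContinuousLinearMap.smul_apply, ContinuousLinearMap.comp_apply,
        ContinuousLinearMap.prod_apply]
      have hsplit : fderiv ℝ r (x t, pad a t) (y t, wh t)
          = fderiv ℝ r (x t, pad a t) (y t, 0) + fderiv ℝ r (x t, pad a t) (0, wh t) := by
        rw [← map_add]
        congr 1
        simp [Prod.mk_add_mk]
      rw [show (Dseq F f x (pad a) t) w = y t from rfl]
      rw [show ((if h : t < F then (ContinuousLinearMap.proj (⟨t, h⟩ : Fin F) :
        (Fin F → Fin m → ℝ) →L[ℝ] (Fin m → ℝ)) else 0)) w = wh t from rfl]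
      rw [hsplit]
      simp [smul_eq_mul, mul_add]
    have hzz : ((0 : Fin n → ℝ), (0 : Fin m → ℝ)) = (0 : (Fin n → ℝ) × (Fin m → ℝ)) := rfl
    have hcol1 : ∑ t ∈ Finset.range F, γ ^ t * fderiv ℝ r (x t, pad a t) (0, wh t)
        = γ ^ (s : ℕ) * fderiv ℝ r (x (s : ℕ), a s) (0, Pi.single i 1) := by
      rw [Finset.sum_eq_single_of_mem (s : ℕ) (Finset.mem_range.mpr s.isLt)]
      · rw [hwhval, if_pos rfl, hpadc]
      · intro t ht hne
        rw [hwhval t, if_neg hne, hzz, map_zero, mul_zero]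
    have hcol2 : ∑ t ∈ Finset.range F, γ ^ (t + 1) * (G (t + 1) ⬝ᵥ fderiv ℝ f (x t, pad a t) (0, wh t))
        = γ ^ ((s : ℕ) + 1) * (G ((s : ℕ) + 1) ⬝ᵥ fderiv ℝ f (x (s : ℕ), a s) (0, Pi.single i 1)) := by
      rw [Finset.sum_eq_single_of_mem (s : ℕ) (Finset.mem_range.mpr s.isLt)]
      · rw [hwhval, if_pos rfl, hpadc]
      · intro t ht hne
        rw [hwhval t, if_neg hne, hzz, map_zero, dotProduct_zero, mul_zero]
    have hQs : fderiv ℝ (Q (s : ℕ)) (a s) (Pi.single i 1)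
        = fderiv ℝ r (x (s : ℕ), a s) (0, Pi.single i 1)
          + γ * (G ((s : ℕ) + 1) ⬝ᵥ fderiv ℝ f (x (s : ℕ), a s) (0, Pi.single i 1)) := by
      have hpt : f (x (s : ℕ), a s) = x ((s : ℕ) + 1) := by rw [hxsucc, hpadc]
      have hb : HasFDerivAt (fun b : Fin m → ℝ => ((x (s : ℕ), b) : (Fin n → ℝ) × (Fin m → ℝ)))
          ((0 : (Fin m → ℝ) →L[ℝ] (Fin n → ℝ)).prod (ContinuousLinearMap.id ℝ (Fin m → ℝ)))
          (a s) := (hasFDerivAt_const _ _).prodMk (hasFDerivAt_id _)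
      have h1 : HasFDerivAt (fun b => r (x (s : ℕ), b))
          ((fderiv ℝ r (x (s : ℕ), a s)).comp
            ((0 : (Fin m → ℝ) →L[ℝ] (Fin n → ℝ)).prod (ContinuousLinearMap.id ℝ (Fin m → ℝ))))
          (a s) := (hrd _).hasFDerivAt.comp (a s) hb
      have hVd : HasFDerivAt V (fderiv ℝ V (x ((s : ℕ) + 1))) (f (x (s : ℕ), a s)) := by
        rw [hpt]; exact (hV _).hasFDerivAt
      have h2 : HasFDerivAt (fun b => V (f (x (s : ℕ), b)))
          ((fderiv ℝ V (x ((s : ℕ) + 1))).comp ((fderiv ℝ f (x (s : ℕ), a s)).comp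
            ((0 : (Fin m → ℝ) →L[ℝ] (Fin n → ℝ)).prod (ContinuousLinearMap.id ℝ (Fin m → ℝ)))))
          (a s) := hVd.comp (a s) ((hfd _).hasFDerivAt.comp (a s) hb)
      have hQ : HasFDerivAt (Q (s : ℕ))
          (((fderiv ℝ r (x (s : ℕ), a s)).comp
            ((0 : (Fin m → ℝ) →L[ℝ] (Fin n → ℝ)).prod (ContinuousLinearMap.id ℝ (Fin m → ℝ))))
          + γ • ((fderiv ℝ V (x ((s : ℕ) + 1))).comp ((fderiv ℝ f (x (s : ℕ), a s)).comp
            ((0 : (Fin m → ℝ) →L[ℝ] (Fin n → ℝ)).prod (ContinuousLinearMap.id ℝ (Fin m → ℝ))))))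
          (a s) := by
        rw [hQdef]
        exact h1.add (h2.const_mul γ)
      rw [hQ.fderiv]
      simp only [ContinuousLinearMap.add_apply, ContinuousLinearMap.smul_apply,
        ContinuousLinearMap.comp_apply, ContinuousLinearMap.prod_apply,
        ContinuousLinearMap.zero_apply, ContinuousLinearMap.id_apply, smul_eq_mul]
      congr 1
      rw [grad_dot V (x ((s : ℕ) + 1)), ← hGdef]
    have hfin : g w = (∑ t ∈ Finset.range F, γ ^ t * fderiv ℝ r (x t, pad a t) (y t, 0))
        + ∑ t ∈ Finset.range F, γ ^ t * fderiv ℝ r (x t, pad a t) (0, wh t) := by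
      rw [hgw, Finset.sum_add_distrib]
    rw [hfin, htel, hcol2, hcol1, hQs]
    ring
  -- differentiability of Q
  have hQdiff : ∀ s : Fin F, DifferentiableAt ℝ (Q (s : ℕ)) (a s) := by
    intro s
    rw [hQdef]
    refine DifferentiableAt.add ?_ (DifferentiableAt.const_mul ?_ γ)
    · exact (hrd _).comp _ ((differentiableAt_const _).prodMk differentiableAt_id)
    · exact (hV _).comp _ ((hfd _).comp _ ((differentiableAt_const _).prodMk differentiableAt_id))
  -- sign of the saturated partial derivatives
  have hsign : ∀ (s : Fin F) (i : Fin m),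
      0 < a s i * fderiv ℝ (Q (s : ℕ)) (a s) (Pi.single i 1) := by
    intro s i
    have h0 := sign_max (Q (s : ℕ)) (a s) (hQdiff s) i (hgreedy s) (hbox s) (hsat s i).1
    rcases h0.lt_or_eq with h | h
    · exact h
    · exfalso
      have hane : a s i ≠ 0 := by
        intro hh
        have := (hsat s i).1
        rw [hh] at this
        simp at this
      rcases mul_eq_zero.mp h.symm with h' | h'
      · exact hane h'
      · exact (hsat s i).2 h'
  -- the positive constant
  have hmne : (Finset.univ : Finset (Fin F × Fin m)).Nonempty :=
    ⟨(⟨0, hF⟩, ⟨0, hm⟩), Finset.mem_univ _⟩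
  set c := Finset.univ.inf' hmne (fun p : Fin F × Fin m =>
    γ ^ (p.1 : ℕ) * |fderiv ℝ (Q (p.1 : ℕ)) (a p.1) (Pi.single p.2 1)|) with hc
  have hcpos : 0 < c := by
    rw [hc, Finset.lt_inf'_iff]
    exact fun p _ => mul_pos (pow_pos hγ _) (abs_pos.mpr (hsat p.1 p.2).2)
  have hcle : ∀ (t : Fin F) (i : Fin m),
      c ≤ γ ^ (t : ℕ) * |fderiv ℝ (Q (t : ℕ)) (a t) (Pi.single i 1)| :=
    fun t i => Finset.inf'_le _ (Finset.mem_univ (t, i))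
  -- per-coordinate estimate
  have hterm : ∀ (t : Fin F) (i : Fin m) (β : ℝ), β ∈ Set.Icc (-1 : ℝ) 1 →
      (β - a t i) * (γ ^ (t : ℕ) * fderiv ℝ (Q (t : ℕ)) (a t) (Pi.single i 1))
        ≤ -(c * |β - a t i|) := fun t i β hβ =>
    term_bound (a t i) β _ _ c hβ.1 hβ.2 (hsat t i).1 (hsign t i) (pow_pos hγ _) (hcle t i)
  -- decomposition of `g (v - a)`
  have hgdec : ∀ v : Fin F → Fin m → ℝ, g (v - a) = ∑ t : Fin F, ∑ i : Fin m,
      (v t i - a t i) * (γ ^ (t : ℕ) * fderiv ℝ (Q (t : ℕ)) (a t) (Pi.single i 1)) := by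
    intro v
    rw [clm_apply_eq_sum2 g (v - a)]
    refine Finset.sum_congr rfl fun t _ => Finset.sum_congr rfl fun i _ => ?_
    rw [key t i]
    simp [smul_eq_mul]
  -- norm bound
  have hnorm : ∀ v : Fin F → Fin m → ℝ,
      ‖v - a‖ ≤ ∑ t : Fin F, ∑ i : Fin m, |v t i - a t i| := by
    intro v
    have hS : (0 : ℝ) ≤ ∑ t : Fin F, ∑ i : Fin m, |v t i - a t i| :=
      Finset.sum_nonneg fun _ _ => Finset.sum_nonneg fun _ _ => abs_nonneg _
    rw [pi_norm_le_iff_of_nonneg hS]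
    intro t
    rw [pi_norm_le_iff_of_nonneg hS]
    intro i
    simp only [Pi.sub_apply, Real.norm_eq_abs]
    calc |v t i - a t i| ≤ ∑ i : Fin m, |v t i - a t i| :=
          Finset.single_le_sum (f := fun i => |v t i - a t i|)
            (fun _ _ => abs_nonneg _) (Finset.mem_univ i)
      _ ≤ ∑ t : Fin F, ∑ i : Fin m, |v t i - a t i| :=
          Finset.single_le_sum (f := fun t => ∑ i : Fin m, |v t i - a t i|)
            (fun _ _ => Finset.sum_nonneg fun _ _ => abs_nonneg _) (Finset.mem_univ t)
  -- main gradient estimate on the box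
  have hmain : ∀ v : Fin F → Fin m → ℝ, (∀ t i, v t i ∈ Set.Icc (-1 : ℝ) 1) →
      g (v - a) ≤ -(c * ‖v - a‖) := by
    intro v hv
    rw [hgdec v]
    have h1 : ∑ t : Fin F, ∑ i : Fin m,
        (v t i - a t i) * (γ ^ (t : ℕ) * fderiv ℝ (Q (t : ℕ)) (a t) (Pi.single i 1))
        ≤ ∑ t : Fin F, ∑ i : Fin m, -(c * |v t i - a t i|) :=
      Finset.sum_le_sum fun t _ => Finset.sum_le_sum fun i _ => hterm t i (v t i) (hv t i)
    have h2 : ∑ t : Fin F, ∑ i : Fin m, -(c * |v t i - a t i|)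
        = -(c * ∑ t : Fin F, ∑ i : Fin m, |v t i - a t i|) := by
      simp [Finset.mul_sum]
    have h3 := mul_le_mul_of_nonneg_left (hnorm v) hcpos.le
    rw [h2] at h1
    linarith
  -- conclude local optimality
  have hlo := hRD.isLittleO.def hcpos
  have hev := hlo.filter_mono (nhdsWithin_le_nhds
    (s := {as : Fin F → Fin m → ℝ | ∀ t i, as t i ∈ Set.Icc (-1 : ℝ) 1}))
  show ∀ᶠ v in 𝓝[{as : Fin F → Fin m → ℝ | ∀ t i, as t i ∈ Set.Icc (-1 : ℝ) 1}] a,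
    Rtot F γ f r x₀ v ≤ Rtot F γ f r x₀ a
  filter_upwards [hev, self_mem_nhdsWithin] with v hv1 hv2
  have h1 : |Rtot F γ f r x₀ v - Rtot F γ f r x₀ a - g (v - a)| ≤ c * ‖v - a‖ := by
    simpa [Real.norm_eq_abs] using hv1
  have h2 := hmain v hv2
  have h3 := (abs_le.mp h1).2
  linarith
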